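/- Let f : ℝⁿ → ℝ be twice continuously differentiable with L_H-Lipschitz Hessian. Fix x ∈ ℝⁿ, set g := ∇f(x) and H := ∇²f(x), and let κ_B > 0 with ‖H‖ ≤ κ_B. Let σ > 0, suppose λ_min(H) ≤ 0, and let v ∈ ℝⁿ satisfy ‖v‖ = 1 and Hv = λ_min(H)·v. Set s := (−λ_min(H)/σ)·v. Then ‖∇f(x+s)‖ ≤ L_H κ_B²/(2σ²) + ‖g‖ + κ_B²/σ. -/

import Mathlib

open RealInnerProductSpace

/-- The smallest eigenvalue of a symmetric operator on ℝⁿ, as the infimum of the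
Rayleigh quotient over the unit sphere. -/
noncomputable def lamMin {n : ℕ} (T : EuclideanSpace ℝ (Fin n) → EuclideanSpace ℝ (Fin n)) : ℝ :=
  sInf {r : ℝ | ∃ v : EuclideanSpace ℝ (Fin n), ‖v‖ = 1 ∧ ⟪v, T v⟫ = r}

/-- Lemma 4.2 of the paper, inequality (4.8): gradient bound after a
second-order eigenstep of the SOAN2C algorithm. -/
theorem gradient_bound_so_step {n : ℕ}
    (f : EuclideanSpace ℝ (Fin n) → ℝ)
    (Hess : EuclideanSpace ℝ (Fin n) → EuclideanSpace ℝ (Fin n) →L[ℝ] EuclideanSpace ℝ (Fin n))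
    (LH : ℝ)
    (hf : ContDiff ℝ 2 f)
    (hHess : ∀ y, HasFDerivAt (gradient f) (Hess y) y)
    (hLip : ∀ y z, ‖Hess y - Hess z‖ ≤ LH * ‖y - z‖)
    (x : EuclideanSpace ℝ (Fin n))
    (κB : ℝ) (hκB : 0 < κB) (hHB : ‖Hess x‖ ≤ κB)
    (σ : ℝ) (hσ : 0 < σ)
    (hlamneg : lamMin (fun w => Hess x w) ≤ 0)
    (v : EuclideanSpace ℝ (Fin n)) (hv : ‖v‖ = 1)
    (heig : Hess x v = lamMin (fun w => Hess x w) • v)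
    (s : EuclideanSpace ℝ (Fin n))
    (hs : s = (-(lamMin fun w => Hess x w) / σ) • v) :
    ‖gradient f (x + s)‖
      ≤ LH * κB ^ 2 / (2 * σ ^ 2) + ‖gradient f x‖ + κB ^ 2 / σ := by
  -- abbreviations
  set lam := lamMin (fun w => Hess x w) with hlam
  have hLH : 0 ≤ LH := by
    have h := hLip v 0
    rw [sub_zero, hv, mul_one] at h
    exact (norm_nonneg _).trans h
  -- norm of s
  have hlamabs : -lam ≤ κB := by
    have h1 : ‖Hess x v‖ ≤ κB := by
      calc ‖Hess x v‖ ≤ ‖Hess x‖ * ‖v‖ := (Hess x).le_opNorm v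
      _ ≤ κB := by rw [hv, mul_one]; exact hHB
    have h2 : ‖Hess x v‖ = -lam := by
      rw [heig, norm_smul, hv, mul_one, Real.norm_eq_abs, abs_of_nonpos hlamneg]
    linarith [h2 ▸ h1]
  have hnn : (0:ℝ) ≤ -lam / σ := div_nonneg (neg_nonneg.2 hlamneg) hσ.le
  have hnorms : ‖s‖ = -lam / σ := by
    rw [hs, norm_smul, hv, mul_one, Real.norm_eq_abs, abs_of_nonneg hnn]
  have hsbound : ‖s‖ ≤ κB / σ := by
    rw [hnorms]; gcongr
  -- norm of Hess x s
  have hHxs : ‖Hess x s‖ ≤ κB ^ 2 / σ := by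
    have : Hess x s = (-lam / σ) • (lam • v) := by
      rw [hs, map_smul, heig]
    rw [this, norm_smul, norm_smul, hv, mul_one, Real.norm_eq_abs, Real.norm_eq_abs,
      abs_of_nonpos hlamneg, abs_of_nonneg hnn]
    have h1 : -lam / σ * -lam = (-lam) * (-lam) / σ := by ring
    rw [h1]
    gcongr
    nlinarith [mul_le_mul hlamabs hlamabs (by linarith : (0:ℝ) ≤ -lam) hκB.le]
  -- Taylor bound: ‖∇f(x+s) - ∇f x - Hess x s‖ ≤ LH/2 * ‖s‖^2
  set φ : ℝ → EuclideanSpace ℝ (Fin n) :=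
    fun t => gradient f (x + t • s) - gradient f x - t • (Hess x s) with hφ
  have hderiv : ∀ t : ℝ, HasDerivAt φ (Hess (x + t • s) s - Hess x s) t := by
    intro t
    have h1 : HasDerivAt (fun t : ℝ => x + t • s) s t := by
      simpa using ((hasDerivAt_id t).smul_const s).const_add x
    have h2 : HasDerivAt (fun t : ℝ => gradient f (x + t • s)) (Hess (x + t • s) s) t :=
      by have := (hHess (x + t • s)).comp_hasDerivAt t h1; exact this
    have h3 := (h2.sub_const (gradient f x)).sub ((hasDerivAt_id t).smul_const (Hess x s))
    simp only [id, one_smul] at h3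
    exact h3
  have htaylor : ‖φ 1‖ ≤ LH * ‖s‖ ^ 2 / 2 * 1 ^ 2 := by
    have := image_norm_le_of_norm_deriv_right_le_deriv_boundary
      (f := φ) (f' := fun t => Hess (x + t • s) s - Hess x s)
      (a := 0) (b := 1)
      (fun t _ => (hderiv t).continuousAt.continuousWithinAt)
      (fun t _ => (hderiv t).hasDerivWithinAt)
      (B := fun t => LH * ‖s‖ ^ 2 / 2 * t ^ 2) (B' := fun t => LH * ‖s‖ ^ 2 * t)
      (by simp [hφ])
      (fun t => by
        have : HasDerivAt (fun t : ℝ => LH * ‖s‖ ^ 2 / 2 * t ^ 2)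
            (LH * ‖s‖ ^ 2 / 2 * (2 * t)) t := by
          simpa using (hasDerivAt_pow 2 t).const_mul (LH * ‖s‖ ^ 2 / 2)
        convert this using 1; ring)
      (fun t ht => by
        calc ‖Hess (x + t • s) s - Hess x s‖
            = ‖(Hess (x + t • s) - Hess x) s‖ := by simp
          _ ≤ ‖Hess (x + t • s) - Hess x‖ * ‖s‖ := (Hess (x + t • s) - Hess x).le_opNorm s
          _ ≤ LH * ‖x + t • s - x‖ * ‖s‖ := by
              apply mul_le_mul_of_nonneg_right (hLip _ _) (norm_nonneg s)
          _ = LH * (t * ‖s‖) * ‖s‖ := by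
              rw [add_sub_cancel_left, norm_smul, Real.norm_eq_abs, abs_of_nonneg ht.1]
          _ = LH * ‖s‖ ^ 2 * t := by ring)
    exact this (Set.right_mem_Icc.mpr zero_le_one)
  have htay : ‖gradient f (x + s) - gradient f x - Hess x s‖ ≤ LH / 2 * ‖s‖ ^ 2 := by
    have h1 : φ 1 = gradient f (x + s) - gradient f x - Hess x s := by simp [hφ]
    rw [← h1]; calc ‖φ 1‖ ≤ LH * ‖s‖ ^ 2 / 2 * 1 ^ 2 := htaylor
    _ = LH / 2 * ‖s‖ ^ 2 := by ring
  -- combine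
  have hs2 : ‖s‖ ^ 2 ≤ κB ^ 2 / σ ^ 2 := by
    have := mul_le_mul hsbound hsbound (norm_nonneg s) (by positivity)
    calc ‖s‖ ^ 2 = ‖s‖ * ‖s‖ := sq ‖s‖
    _ ≤ κB / σ * (κB / σ) := this
    _ = κB ^ 2 / σ ^ 2 := by ring
  calc ‖gradient f (x + s)‖
      = ‖(gradient f (x + s) - gradient f x - Hess x s) + gradient f x + Hess x s‖ := by
        congr 1; abel
    _ ≤ ‖gradient f (x + s) - gradient f x - Hess x s‖ + ‖gradient f x‖ + ‖Hess x s‖ := by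
        exact (norm_add_le _ _).trans (add_le_add_left (norm_add_le _ _) _)
    _ ≤ LH / 2 * ‖s‖ ^ 2 + ‖gradient f x‖ + κB ^ 2 / σ := by
        exact add_le_add (add_le_add htay le_rfl) hHxs
    _ ≤ LH * κB ^ 2 / (2 * σ ^ 2) + ‖gradient f x‖ + κB ^ 2 / σ := by
        have : LH / 2 * ‖s‖ ^ 2 ≤ LH / 2 * (κB ^ 2 / σ ^ 2) :=
          mul_le_mul_of_nonneg_left hs2 (by linarith)
        have h2 : LH / 2 * (κB ^ 2 / σ ^ 2) = LH * κB ^ 2 / (2 * σ ^ 2) := by ring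
        linarith [h2 ▸ this]
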